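/- Let X be a skew-symmetric n×n matrix over a commutative ring whose only nonzero entries are X[i][i+1] = x_i and X[i+1][i] = -x_i for i = 1,…,n-1. If n is even, then det X = ∏_{k=0}^{(n-2)/2} x_{2k+1}^2, i.e. the square of the product of the x_i with odd index i. -/

import Mathlib

theorem tridiag_aux {R : Type*} [CommRing R] :
    ∀ (n : ℕ), Even n → ∀ (x : ℕ → R) (X : Matrix (Fin n) (Fin n) R),
    (∀ i j : Fin n,
      X i j = if (j : ℕ) = (i : ℕ) + 1 then x ((i : ℕ) + 1)
        else if (i : ℕ) = (j : ℕ) + 1 then - x ((j : ℕ) + 1) else 0) →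
    X.det = ∏ k ∈ Finset.range (n / 2), (x (2 * k + 1)) ^ 2 := by
  intro n
  induction n using Nat.strong_induction_on with
  | _ n ih =>
    match n with
    | 0 => intro _ x X _; simp [Matrix.det_fin_zero]
    | 1 => intro hn; exact absurd hn (by decide)
    | (m+2) =>
      intro hn x X hX
      have hm : Even m := by
        rcases hn with ⟨k, hk⟩
        exact ⟨k - 1, by omega⟩
      -- expand along row 0
      have h1 : X.det = (-1 : R) ^ ((1 : Fin (m+2)) : ℕ) * X 0 1 *
          (X.submatrix Fin.succ (Fin.succAbove 1)).det := by
        rw [Matrix.det_succ_row_zero]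
        apply Finset.sum_eq_single (1 : Fin (m+2))
        · intro b _ hb
          have hb' : (b : ℕ) ≠ 1 := by
            intro h; apply hb; exact Fin.ext (by simp [h])
          have : X 0 b = 0 := by
            rw [hX]; simp only [Fin.val_zero]
            split_ifs <;> simp_all
          simp [this]
        · intro h; simp at h
      set M1 := X.submatrix Fin.succ (Fin.succAbove 1) with hM1
      have h2 : M1.det = (-1 : R) ^ ((0 : Fin (m+1)) : ℕ) * M1 0 0 *
          (M1.submatrix (Fin.succAbove 0) Fin.succ).det := by
        rw [Matrix.det_succ_column_zero]
        apply Finset.sum_eq_single (0 : Fin (m+1))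
        · intro b _ hb
          have hb' : (b : ℕ) ≠ 0 := fun h => hb (Fin.ext (by simp [h]))
          have : M1 b 0 = 0 := by
            rw [hM1]
            simp only [Matrix.submatrix_apply]
            rw [hX]
            have hv : ((Fin.succAbove (1 : Fin (m+2)) 0 : Fin (m+2)) : ℕ) = 0 := by
              simp [Fin.succAbove]
            rw [hv]
            have : ((Fin.succ b : Fin (m+2)) : ℕ) = (b : ℕ) + 1 := rfl
            rw [this]
            rw [if_neg (by omega), if_neg (by omega)]
          simp [this]
        · intro h; simp at h
      set M2 := M1.submatrix (Fin.succAbove 0) Fin.succ with hM2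
      have hM2' : ∀ i j : Fin m,
          M2 i j = if (j : ℕ) = (i : ℕ) + 1 then (fun k => x (k+2)) ((i : ℕ) + 1)
            else if (i : ℕ) = (j : ℕ) + 1 then - (fun k => x (k+2)) ((j : ℕ) + 1) else 0 := by
        intro i j
        have hi : ((Fin.succ (Fin.succAbove (0 : Fin (m+1)) i) : Fin (m+2)) : ℕ) = (i : ℕ) + 2 := by
          simp [Fin.succAbove]
        have hj : ((Fin.succAbove (1 : Fin (m+2)) (Fin.succ j) : Fin (m+2)) : ℕ) = (j : ℕ) + 2 := by
          have : ¬ ((Fin.succ j).castSucc < (1 : Fin (m+2))) := by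
            simp [Fin.lt_iff_val_lt_val]
          simp [Fin.succAbove, this]
        rw [hM2, hM1]
        simp only [Matrix.submatrix_apply]
        rw [hX, hi, hj]
        by_cases h : (j : ℕ) = (i : ℕ) + 1
        · rw [if_pos (show (j:ℕ)+2 = (i:ℕ)+2+1 by omega), if_pos h]
        · rw [if_neg (show ¬((j:ℕ)+2 = (i:ℕ)+2+1) by omega), if_neg h]
          by_cases h2 : (i : ℕ) = (j : ℕ) + 1
          · rw [if_pos (show (i:ℕ)+2 = (j:ℕ)+2+1 by omega), if_pos h2]
          · rw [if_neg (show ¬((i:ℕ)+2 = (j:ℕ)+2+1) by omega), if_neg h2]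
      have hdet2 := ih m (by omega) hm (fun k => x (k+2)) M2 hM2'
      have hX01 : X 0 1 = x 1 := by rw [hX]; norm_num
      have hM100 : M1 0 0 = - x 1 := by
        rw [hM1]; simp only [Matrix.submatrix_apply]
        rw [hX]
        have hv : ((Fin.succAbove (1 : Fin (m+2)) 0 : Fin (m+2)) : ℕ) = 0 := by
          simp [Fin.succAbove]
        have hv2 : ((Fin.succ (0 : Fin (m+1)) : Fin (m+2)) : ℕ) = 1 := rfl
        rw [hv, hv2]
        norm_num
      rw [h1, h2, hX01, hM100, hdet2]
      have hdiv : (m + 2) / 2 = m / 2 + 1 := by omega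
      rw [hdiv, Finset.prod_range_succ']
      simp only [Fin.val_one, Fin.val_zero, pow_one, pow_zero, one_mul]
      have hp : (∏ k ∈ Finset.range (m/2), (fun k => x (k+2)) (2*k+1) ^ 2)
          = ∏ k ∈ Finset.range (m/2), x (2*(k+1)+1) ^ 2 := by
        apply Finset.prod_congr rfl
        intro k _
        congr 2
      rw [hp]
      have h01 : (2*0+1) = 1 := rfl
      rw [h01]
      ring

/-- A tridiagonal skew-symmetric matrix of even order `n` has
determinant `∏_{k=0}^{(n-2)/2} x_{2k+1}^2`, the square of the product of the
superdiagonal entries with odd (one-based) index. -/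
theorem tridiagonal_skew_det_of_even
    {R : Type*} [CommRing R] (n : ℕ) (hn : Even n) (x : ℕ → R)
    (X : Matrix (Fin n) (Fin n) R)
    (hX : ∀ i j : Fin n,
      X i j = if (j : ℕ) = (i : ℕ) + 1 then x ((i : ℕ) + 1)
        else if (i : ℕ) = (j : ℕ) + 1 then - x ((j : ℕ) + 1) else 0) :
    X.det = ∏ k ∈ Finset.range (n / 2), (x (2 * k + 1)) ^ 2 := by
  exact tridiag_aux n hn x X hX
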